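/- Let X = {0,1}^d and let f*_1(x) = 1 if x is the all-zeros vector and 0 otherwise, and f*_0(x) = 0 for all x. Let ρ be the uniform distribution on X and let n ≤ 2^{d−1}. Then for any learner A mapping labeled datasets in (X × {0,1})^n to hypotheses, there exists h* ∈ {f*_0, f*_1} such that, when X_1,…,X_n are drawn i.i.d. from ρ and D_{h*} = ((X_1,h*(X_1)),…,(X_n,h*(X_n))), the probability that A(D_{h*}) ≠ h* is at least 1/4. -/

import Mathlib

open MeasureTheory ENNReal

/-- Bernoulli's inequality in `ℝ≥0∞` (with truncated subtraction). -/
lemma ennreal_bernoulli (a : ℝ≥0∞) (_ha : a ≠ ⊤) :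
    ∀ m : ℕ, (1 : ℝ≥0∞) - m * a ≤ (1 - a) ^ m := by
  intro m
  induction m with
  | zero => simp
  | succ k ih =>
    have hc : (1 : ℝ≥0∞) - a ≠ ⊤ := by
      exact ne_top_of_le_ne_top one_ne_top tsub_le_self
    calc (1 : ℝ≥0∞) - (k + 1 : ℕ) * a
        = 1 - (a + k * a) := by
          push_cast
          ring_nf
      _ = (1 - a) - k * a := by rw [tsub_add_eq_tsub_tsub]
      _ ≤ (1 - a) - (k * a) * (1 - a) := by
          apply tsub_le_tsub_left
          calc (k * a) * (1 - a) ≤ (k * a) * 1 := by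
                exact mul_le_mul_right tsub_le_self _
            _ = k * a := mul_one _
      _ = 1 * (1 - a) - (k * a) * (1 - a) := by rw [one_mul]
      _ = (1 - k * a) * (1 - a) := by
          rw [ENNReal.sub_mul]
          intro _ _
          exact hc
      _ ≤ (1 - a) ^ k * (1 - a) := mul_le_mul_left ih _
      _ = (1 - a) ^ (k + 1) := (pow_succ _ _).symm

theorem all_learners_fail_indicator_of_zero
    (d : ℕ) (hd : 1 ≤ d)
    (n : ℕ) (hn : n ≤ 2 ^ (d - 1))
    (A : (Fin n → (Fin d → Bool) × Bool) → ((Fin d → Bool) → Bool)) :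
    let ρ : Measure (Fin d → Bool) := (PMF.uniformOfFintype (Fin d → Bool)).toMeasure
    let f0 : (Fin d → Bool) → Bool := fun _ => false
    let f1 : (Fin d → Bool) → Bool := fun x => decide (x = fun _ => false)
    ∃ h, (h = f0 ∨ h = f1) ∧
      (Measure.pi fun _ : Fin n => ρ) {ω | A (fun i => (ω i, h (ω i))) ≠ h} ≥ 1 / 4 := by
  intro ρ f0 f1
  set z : Fin d → Bool := fun _ => false with hz
  set μ := Measure.pi fun _ : Fin n => ρ with hμ
  by_contra hcon
  push_neg at hcon
  have h0 : μ {ω | A (fun i => (ω i, f0 (ω i))) ≠ f0} < 1 / 4 := hcon f0 (Or.inl rfl)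
  have h1 : μ {ω | A (fun i => (ω i, f1 (ω i))) ≠ f1} < 1 / 4 := hcon f1 (Or.inr rfl)
  -- the "all samples miss z" event
  set S : Set (Fin n → Fin d → Bool) := Set.pi Set.univ (fun _ => {z}ᶜ) with hS
  -- On S, the two datasets coincide, and the learner must fail for one of f0, f1
  have hsub : S ⊆ {ω | A (fun i => (ω i, f0 (ω i))) ≠ f0} ∪
      {ω | A (fun i => (ω i, f1 (ω i))) ≠ f1} := by
    intro ω hω
    have hdata : (fun i => (ω i, f0 (ω i))) = (fun i => (ω i, f1 (ω i))) := by
      funext i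
      have : ω i ≠ z := hω i (Set.mem_univ i)
      simp [f0, f1, hz, this]
      exact this
    have hne : f0 ≠ f1 := by
      intro hEq
      have := congrFun hEq z
      simp [f0, f1, hz] at this
    by_cases hA : A (fun i => (ω i, f0 (ω i))) = f0
    · right
      simp only [Set.mem_setOf_eq, ← hdata, hA]
      exact hne
    · left
      exact hA
  -- Probability that all samples miss z
  have hzmeas : MeasurableSet ({z} : Set (Fin d → Bool)) := measurableSet_singleton z
  have hρz : ρ {z} = (2 ^ d : ℝ≥0∞)⁻¹ := by
    rw [PMF.toMeasure_apply_singleton _ _ hzmeas, PMF.uniformOfFintype_apply]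
    norm_num [Fintype.card_fun]
  have hρzc : ρ ({z}ᶜ) = 1 - (2 ^ d : ℝ≥0∞)⁻¹ := by
    rw [measure_compl hzmeas (measure_ne_top ρ _), hρz, measure_univ]
  have hiv : (2 ^ d : ℝ≥0∞)⁻¹ ≠ ⊤ := by
    simp
  have hnbound : (n : ℝ≥0∞) * (2 ^ d : ℝ≥0∞)⁻¹ ≤ 2⁻¹ := by
    have hsplit : (2 : ℝ≥0∞) ^ d = 2 ^ (d - 1) * 2 := by
      rw [← pow_succ]
      congr 1
      omega
    rw [hsplit, ENNReal.mul_inv (Or.inl (by simp)) (Or.inr (by norm_num))]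
    calc (n : ℝ≥0∞) * ((2 ^ (d - 1) : ℝ≥0∞)⁻¹ * 2⁻¹)
        ≤ (2 ^ (d - 1) : ℝ≥0∞) * ((2 ^ (d - 1) : ℝ≥0∞)⁻¹ * 2⁻¹) := by
          apply mul_le_mul_left
          exact_mod_cast Nat.cast_le.mpr hn
      _ = (2 ^ (d - 1) : ℝ≥0∞) * (2 ^ (d - 1) : ℝ≥0∞)⁻¹ * 2⁻¹ := by ring
      _ = 2⁻¹ := by
          rw [ENNReal.mul_inv_cancel (by positivity) (by simp), one_mul]
  have hμS : μ S ≥ 1 / 2 := by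
    have : μ S = (1 - (2 ^ d : ℝ≥0∞)⁻¹) ^ n := by
      rw [hS, hμ, Measure.pi_pi]
      simp [hρzc]
    rw [this]
    calc (1 : ℝ≥0∞) / 2 = 1 - 2⁻¹ := by
          rw [one_div, ENNReal.one_sub_inv_two]
      _ ≤ 1 - (n : ℝ≥0∞) * (2 ^ d : ℝ≥0∞)⁻¹ := tsub_le_tsub_left hnbound 1
      _ ≤ (1 - (2 ^ d : ℝ≥0∞)⁻¹) ^ n := ennreal_bernoulli _ hiv n
  have hbound : μ S ≤ μ {ω | A (fun i => (ω i, f0 (ω i))) ≠ f0} +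
      μ {ω | A (fun i => (ω i, f1 (ω i))) ≠ f1} :=
    le_trans (measure_mono hsub) (measure_union_le _ _)
  have : (1 : ℝ≥0∞) / 2 ≤ μ {ω | A (fun i => (ω i, f0 (ω i))) ≠ f0} +
      μ {ω | A (fun i => (ω i, f1 (ω i))) ≠ f1} := le_trans hμS hbound
  have hlt : μ {ω | A (fun i => (ω i, f0 (ω i))) ≠ f0} +
      μ {ω | A (fun i => (ω i, f1 (ω i))) ≠ f1} < 1 / 4 + 1 / 4 :=
    ENNReal.add_lt_add h0 h1
  have hfin : (1 : ℝ≥0∞) / 2 < 1 / 4 + 1 / 4 := lt_of_le_of_lt this hlt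
  have h4 : (1 : ℝ≥0∞) / 4 + 1 / 4 = 1 / 2 := by
    simp only [one_div]
    have h42 : (4 : ℝ≥0∞) = 2 * 2 := by norm_num
    rw [h42, ENNReal.mul_inv (Or.inl (by norm_num)) (Or.inr (by norm_num)), ← two_mul,
      ← mul_assoc, ENNReal.mul_inv_cancel (by norm_num) (by norm_num), one_mul]
  rw [h4] at hfin
  exact lt_irrefl _ hfin
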